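/- Let {J^a_n} be a level-k representation of affine sl(2) on V possessing a vector v₀ with J^a_n v₀ = 0 for all n ≥ 0 and a ∈ {0,+,−}, and suppose V is freely generated from v₀ by the negative modes: there exists an enumeration X₁, X₂, X₃, … of the family {J^a_{−n} : a ∈ {0,+,−}, n ≥ 1} such that the vectors X_{i₁} X_{i₂} ⋯ X_{i_r} v₀, over all finite non-increasing index sequences i₁ ≥ ⋯ ≥ i_r (r ≥ 0), form a basis of V (V is the vacuum module D^k₀). Then the space { φ ∈ V* : φ ∘ J^a_{−m} = 0 for all a ∈ {0,+,−} and all m ≥ 0 } is one-dimensional, spanned by the coordinate functional of v₀ with respect to the given basis. (This says that the one-point conformal block space H(p, D^k₀) on ℂP¹ is one-dimensional.) -/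

import Mathlib

/-!
Level-`k` representations of affine `sl(2)`.

A level-`k` representation of affine `sl(2)` on a complex vector space `V` is a
family of linear endomorphisms `J⁰_n, J⁺_n, J⁻_n` (`n ∈ ℤ`) satisfying
`[J⁺_m, J⁻_n] = J⁰_{m+n} + k·m·δ_{m+n,0}·id`, `[J⁰_m, J^±_n] = ±2 J^±_{m+n}`,
`[J⁰_m, J⁰_n] = 2k·m·δ_{m+n,0}·id`, `[J⁺_m, J⁺_n] = [J⁻_m, J⁻_n] = 0`.

For `s ∈ ℤ`, the spectral flow `ϑ_s` replaces `J^±_n` by `J^±_{n∓s}` and `J⁰_n` by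
`J⁰_n − s·k·δ_{n,0}·id`.
-/

noncomputable section

/-- a family of operators `J⁰_n, J⁺_n, J⁻_n` (`n ∈ ℤ`) on `V` -/
structure AffineFamily (V : Type*) [AddCommGroup V] [Module ℂ V] where
  Jz : ℤ → Module.End ℂ V
  Jp : ℤ → Module.End ℂ V
  Jm : ℤ → Module.End ℂ V

variable {V W : Type*}

/-- the commutation relations making an `AffineFamily` a level-`k` representation of
affine `sl(2)` -/
def IsLevelRep [AddCommGroup V] [Module ℂ V] (k : ℂ) (ρ : AffineFamily V) : Prop :=
  (∀ m n : ℤ, ρ.Jp m * ρ.Jm n - ρ.Jm n * ρ.Jp m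
      = ρ.Jz (m + n) + (if m + n = 0 then k * (m : ℂ) else 0) • 1) ∧
  (∀ m n : ℤ, ρ.Jz m * ρ.Jp n - ρ.Jp n * ρ.Jz m = (2 : ℂ) • ρ.Jp (m + n)) ∧
  (∀ m n : ℤ, ρ.Jz m * ρ.Jm n - ρ.Jm n * ρ.Jz m = (-2 : ℂ) • ρ.Jm (m + n)) ∧
  (∀ m n : ℤ, ρ.Jz m * ρ.Jz n - ρ.Jz n * ρ.Jz m
      = (if m + n = 0 then 2 * k * (m : ℂ) else 0) • 1) ∧
  (∀ m n : ℤ, ρ.Jp m * ρ.Jp n = ρ.Jp n * ρ.Jp m) ∧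
  (∀ m n : ℤ, ρ.Jm m * ρ.Jm n = ρ.Jm n * ρ.Jm m)

/-- the spectral flow `ϑ_s` of a level-`k` family:
`J^±_n ↦ J^±_{n∓s}`, `J⁰_n ↦ J⁰_n − s·k·δ_{n,0}·id` -/
def flow [AddCommGroup V] [Module ℂ V] (k : ℂ) (s : ℤ) (ρ : AffineFamily V) :
    AffineFamily V where
  Jz n := ρ.Jz n - (if n = 0 then (s : ℂ) * k else 0) • 1
  Jp n := ρ.Jp (n - s)
  Jm n := ρ.Jm (n + s)

/-- the negative-mode operators `{J^a_{−n} : a ∈ {0,+,−}, n ≥ 1}` of a family,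
labelled by `Fin 3 × ℕ` (the label `(a, n)` corresponds to the mode `−(n+1)`) -/
def negMode [AddCommGroup V] [Module ℂ V] (ρ : AffineFamily V) (p : Fin 3 × ℕ) :
    Module.End ℂ V :=
  if p.1 = 0 then ρ.Jz (-((p.2 : ℤ) + 1))
  else if p.1 = 1 then ρ.Jp (-((p.2 : ℤ) + 1))
  else ρ.Jm (-((p.2 : ℤ) + 1))


namespace Stmt19

def Cc : Fin 3 → Fin 3 → ℂ := ![![0, 2, -2], ![-2, 0, 1], ![2, -1, 0]]
def Tt : Fin 3 → Fin 3 → Fin 3 := ![![0, 1, 2], ![1, 0, 0], ![2, 0, 0]]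

variable [AddCommGroup V] [Module ℂ V]

/-- unified access to the three families -/
def Jgen (ρ : AffineFamily V) (a : Fin 3) (n : ℤ) : Module.End ℂ V :=
  if a = 0 then ρ.Jz n else if a = 1 then ρ.Jp n else ρ.Jm n

lemma negMode_eq (ρ : AffineFamily V) (p : Fin 3 × ℕ) :
    negMode ρ p = Jgen ρ p.1 (-((p.2 : ℤ) + 1)) := rfl

lemma aux1 {A B C : Module.End ℂ V} (h : A - B = C) : A = B + C :=
  sub_eq_iff_eq_add'.mp h

lemma aux2 {A B C : Module.End ℂ V} (h : B - A = C) : A = B + -C := by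
  rw [← h]; abel

lemma aux3 {A B C : Module.End ℂ V} (h : B - A = -C) : A = B + C := by
  rw [← neg_neg C, ← h]; abel

lemma comm_neg {k : ℂ} {ρ : AffineFamily V} (hρ : IsLevelRep k ρ) (a c : Fin 3)
    (m n : ℤ) (hm : m ≤ 0) (hn : n < 0) :
    Jgen ρ a m * Jgen ρ c n
      = Jgen ρ c n * Jgen ρ a m + Cc a c • Jgen ρ (Tt a c) (m + n) := by
  obtain ⟨h1, h2, h3, h4, h5, h6⟩ := hρ
  have hmn : ¬ (m + n = 0) := by omega
  have hnm : ¬ (n + m = 0) := by omega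
  fin_cases a <;> fin_cases c <;>
    norm_num [Jgen, Cc, Tt, Fin.ext_iff, Matrix.cons_val_zero, Matrix.cons_val_one,
      Matrix.head_cons, Matrix.cons_val_fin_one, Fin.isValue]
  · exact sub_eq_zero.mp (by simpa [hmn] using h4 m n)
  · exact aux1 (h2 m n)
  · exact aux1 (by rw [h3 m n, neg_smul])
  · exact aux2 (by rw [add_comm m n]; exact h2 n m)
  · exact h5 m n
  · exact aux1 (by simpa [hmn] using h1 m n)
  · exact aux3 (by rw [add_comm m n, ← neg_smul]; exact h3 n m)
  · exact aux2 (by rw [add_comm m n]; simpa [hnm] using h1 n m)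
  · exact h6 m n

/-- number of inversions (adjacent-transposition distance to sorted) -/
def inv' : List ℕ → ℕ
  | [] => 0
  | x :: t => t.countP (fun y => decide (x < y)) + inv' t

lemma inv'_le (l : List ℕ) : inv' l ≤ l.length * l.length := by
  induction l with
  | nil => simp [inv']
  | cons x t ih =>
    have h1 : t.countP (fun y => decide (x < y)) ≤ t.length := List.countP_le_length
    simp only [inv', List.length_cons]
    nlinarith

lemma inv'_append (u v : List ℕ) :
    inv' (u ++ v) = inv' u + (u.map fun z => v.countP (fun y => decide (z < y))).sum
      + inv' v := by
  induction u with
  | nil => simp [inv']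
  | cons x t ih => simp [inv', List.countP_append, ih]; omega

lemma inv'_swap (u t : List ℕ) {a c : ℕ} (h : a < c) :
    inv' (u ++ c :: a :: t) < inv' (u ++ a :: c :: t) := by
  have hperm : (c :: a :: t).Perm (a :: c :: t) := List.Perm.swap _ _ _
  rw [inv'_append, inv'_append]
  have hmap : (u.map fun z => (c :: a :: t).countP (fun y => decide (z < y)))
      = u.map fun z => (a :: c :: t).countP (fun y => decide (z < y)) :=
    List.map_congr_left fun z _ => hperm.countP_eq _
  rw [hmap]
  have h1 : inv' (c :: a :: t) < inv' (a :: c :: t) := by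
    simp only [inv', List.countP_cons]
    have hca : ¬ (c < a) := by omega
    simp [h, hca]
    omega
  omega

lemma exists_desc {l : List ℕ} (h : ¬ l.Chain' (· ≥ ·)) :
    ∃ u a c t, l = u ++ a :: c :: t ∧ a < c := by
  induction l with
  | nil => exact absurd List.isChain_nil h
  | cons x t ih =>
    cases t with
    | nil => exact absurd (List.isChain_singleton x) h
    | cons y s =>
      simp only [List.Chain', List.isChain_cons_cons] at h
      by_cases hxy : x ≥ y
      · obtain ⟨u, a, c, t', heq, hac⟩ := ih fun hc => h ⟨hxy, hc⟩
        exact ⟨x :: u, a, c, t', by rw [List.cons_append, ← heq], hac⟩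
      · exact ⟨[], x, y, s, rfl, by omega⟩

variable {k : ℂ} {ρ : AffineFamily V} {e : ℕ ≃ Fin 3 × ℕ} {v₀ : V}

/-- the product of negative modes labelled by `l`, applied to `v₀` -/
def Wl (ρ : AffineFamily V) (e : ℕ ≃ Fin 3 × ℕ) (v₀ : V) (l : List ℕ) : V :=
  ((l.map fun i => negMode ρ (e i)).prod) v₀

lemma Wl_nil : Wl ρ e v₀ [] = v₀ := by simp [Wl]

lemma Wl_cons (i : ℕ) (t : List ℕ) :
    Wl ρ e v₀ (i :: t) = negMode ρ (e i) (Wl ρ e v₀ t) := by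
  simp [Wl, Module.End.mul_apply]

lemma Wl_append (u x : List ℕ) :
    Wl ρ e v₀ (u ++ x) = ((u.map fun i => negMode ρ (e i)).prod) (Wl ρ e v₀ x) := by
  simp [Wl, Module.End.mul_apply]

/-- the span of the basis vectors with nonempty label -/
def NN (b : Module.Basis {l : List ℕ // l.Chain' (· ≥ ·)} ℂ V) : Submodule ℂ V :=
  Submodule.span ℂ (b '' {l | l.val ≠ []})

lemma Wl_swap (hρ : IsLevelRep k ρ) (u t : List ℕ) (a c : ℕ) :
    Wl ρ e v₀ (u ++ a :: c :: t)
      = Wl ρ e v₀ (u ++ c :: a :: t)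
        + Cc (e a).1 (e c).1 •
          Wl ρ e v₀ (u ++ (e.symm (Tt (e a).1 (e c).1, (e a).2 + (e c).2 + 1)) :: t) := by
  have hcomm := comm_neg hρ (e a).1 (e c).1 (-(((e a).2 : ℤ) + 1)) (-(((e c).2 : ℤ) + 1))
      (by omega) (by omega)
  have hmode : (-(((e a).2 : ℤ) + 1)) + (-(((e c).2 : ℤ) + 1))
      = -(((((e a).2 + (e c).2 + 1 : ℕ)) : ℤ) + 1) := by push_cast; ring
  rw [hmode] at hcomm
  have hinner : Wl ρ e v₀ (a :: c :: t)
      = Wl ρ e v₀ (c :: a :: t) + Cc (e a).1 (e c).1 •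
          Wl ρ e v₀ ((e.symm (Tt (e a).1 (e c).1, (e a).2 + (e c).2 + 1)) :: t) := by
    rw [Wl_cons, Wl_cons, Wl_cons, Wl_cons, Wl_cons, negMode_eq ρ (e a), negMode_eq ρ (e c),
      negMode_eq, Equiv.apply_symm_apply]
    have happ := congrArg (fun F : Module.End ℂ V => F (Wl ρ e v₀ t)) hcomm
    simpa [Module.End.mul_apply] using happ
  rw [Wl_append, Wl_append, Wl_append, hinner, map_add, map_smul]

lemma Wl_mem (hρ : IsLevelRep k ρ) (b : Module.Basis {l : List ℕ // l.Chain' (· ≥ ·)} ℂ V)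
    (hb : ∀ l : {l : List ℕ // l.Chain' (· ≥ ·)}, b l = Wl ρ e v₀ l.val) :
    ∀ (n : ℕ) (l : List ℕ), l.length ^ 3 + inv' l ≤ n → l ≠ [] → Wl ρ e v₀ l ∈ NN b := by
  intro n
  induction n using Nat.strong_induction_on with
  | _ n ih =>
    intro l hn hne
    by_cases hc : l.Chain' (· ≥ ·)
    · rw [show Wl ρ e v₀ l = b ⟨l, hc⟩ from (hb ⟨l, hc⟩).symm]
      exact Submodule.subset_span ⟨⟨l, hc⟩, hne, rfl⟩
    · obtain ⟨u, a, c, t, rfl, hac⟩ := exists_desc hc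
      rw [Wl_swap hρ u t a c]
      refine add_mem ?_ (Submodule.smul_mem _ _ ?_)
      · have hlen : (u ++ c :: a :: t).length = (u ++ a :: c :: t).length := by simp
        have hinv : inv' (u ++ c :: a :: t) < inv' (u ++ a :: c :: t) := inv'_swap u t hac
        exact ih ((u ++ c :: a :: t).length ^ 3 + inv' (u ++ c :: a :: t))
          (by rw [hlen]; omega) _ le_rfl (by simp)
      · set g := e.symm (Tt (e a).1 (e c).1, (e a).2 + (e c).2 + 1) with hg
        have hlen : (u ++ g :: t).length + 1 = (u ++ a :: c :: t).length := by simp; omega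
        apply ih ((u ++ g :: t).length ^ 3 + inv' (u ++ g :: t)) ?_ _ le_rfl (by simp)
        have hinvb : inv' (u ++ g :: t) ≤ (u ++ g :: t).length * (u ++ g :: t).length :=
          inv'_le _
        rw [← hlen] at hn
        nlinarith [hn, hinvb]

lemma NN_stable (hρ : IsLevelRep k ρ) {b : Module.Basis {l : List ℕ // l.Chain' (· ≥ ·)} ℂ V}
    (hb : ∀ l : {l : List ℕ // l.Chain' (· ≥ ·)}, b l = Wl ρ e v₀ l.val)
    (p : Fin 3 × ℕ) {x : V} (hx : x ∈ NN b) : negMode ρ p x ∈ NN b := by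
  induction hx using Submodule.span_induction with
  | mem y hy =>
    obtain ⟨l, hl, rfl⟩ := hy
    rw [hb l]
    have hkey : negMode ρ p (Wl ρ e v₀ l.val) = Wl ρ e v₀ (e.symm p :: l.val) := by
      rw [Wl_cons, Equiv.apply_symm_apply]
    rw [hkey]
    exact Wl_mem hρ b hb _ _ le_rfl (by simp)
  | zero => rw [map_zero]; exact (NN b).zero_mem
  | add y z _ _ hy hz => rw [map_add]; exact add_mem hy hz
  | smul a y _ hy => rw [map_smul]; exact Submodule.smul_mem _ _ hy

lemma Jneg_mem (hρ : IsLevelRep k ρ)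
    (hv : ∀ n : ℤ, 0 ≤ n → ρ.Jz n v₀ = 0 ∧ ρ.Jp n v₀ = 0 ∧ ρ.Jm n v₀ = 0)
    {b : Module.Basis {l : List ℕ // l.Chain' (· ≥ ·)} ℂ V}
    (hb : ∀ l : {l : List ℕ // l.Chain' (· ≥ ·)}, b l = Wl ρ e v₀ l.val) :
    ∀ (l : List ℕ) (a : Fin 3) (m : ℤ), 0 ≤ m → Jgen ρ a (-m) (Wl ρ e v₀ l) ∈ NN b := by
  intro l
  induction l with
  | nil =>
    intro a m hm'
    rw [Wl_nil]
    rcases eq_or_lt_of_le hm' with h0 | hm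
    · subst h0
      have hz : Jgen ρ a (-0) v₀ = 0 := by
        rw [neg_zero]
        unfold Jgen
        split_ifs
        · exact (hv 0 le_rfl).1
        · exact (hv 0 le_rfl).2.1
        · exact (hv 0 le_rfl).2.2
      rw [hz]
      exact (NN b).zero_mem
    have hkey : Jgen ρ a (-m) = negMode ρ (a, (m - 1).toNat) := by
      rw [negMode_eq]
      congr 1
      omega
    rw [hkey]
    have h2 : negMode ρ (a, (m - 1).toNat) v₀ = Wl ρ e v₀ [e.symm (a, (m - 1).toNat)] := by
      rw [Wl_cons, Wl_nil, Equiv.apply_symm_apply]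
    rw [h2]
    exact Wl_mem hρ b hb _ _ le_rfl (by simp)
  | cons i t ih =>
    intro a m hm
    rw [Wl_cons, negMode_eq]
    have hcomm := comm_neg hρ a (e i).1 (-m) (-((((e i).2 : ℕ) : ℤ) + 1)) (by omega) (by omega)
    have happ := congrArg (fun F : Module.End ℂ V => F (Wl ρ e v₀ t)) hcomm
    simp only [Module.End.mul_apply, LinearMap.add_apply, LinearMap.smul_apply] at happ
    rw [happ]
    refine add_mem ?_ (Submodule.smul_mem _ _ ?_)
    · rw [← negMode_eq]
      exact NN_stable hρ hb _ (ih a m hm)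
    · have hmode : (-m) + (-((((e i).2 : ℕ) : ℤ) + 1)) = -(m + ((e i).2 : ℤ) + 1) := by ring
      rw [hmode]
      exact ih (Tt a (e i).1) (m + ((e i).2 : ℤ) + 1) (by omega)

lemma coord_NN (b : Module.Basis {l : List ℕ // l.Chain' (· ≥ ·)} ℂ V) {x : V} (hx : x ∈ NN b) :
    b.coord ⟨[], List.isChain_nil⟩ x = 0 := by
  have hle : NN b ≤ LinearMap.ker (b.coord ⟨[], List.isChain_nil⟩) := by
    rw [NN, Submodule.span_le]
    rintro y ⟨l, hl, rfl⟩
    have hne : l ≠ (⟨[], List.isChain_nil⟩ : {l : List ℕ // l.Chain' (· ≥ ·)}) := by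
      intro h
      exact hl (congrArg Subtype.val h)
    simp [LinearMap.mem_ker, Module.Basis.coord_apply, Module.Basis.repr_self, Finsupp.single_apply, hne]
  exact hle hx

end Stmt19
/-- Let `{J^a_n}` be a level-`k` representation of affine `sl(2)`
on `V` with a vector `v₀` annihilated by all modes `J^a_n`, `n ≥ 0`, such that `V` is
freely generated from `v₀` by the negative modes: for some enumeration `X₁, X₂, …` of
`{J^a_{−n} : n ≥ 1}` (via a bijection `e`), the vectors `X_{i₁}⋯X_{i_r} v₀` over all
non-increasing index sequences form a basis of `V` (`V` is the vacuum module `D^k₀`).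
Then the space `{φ ∈ V* : φ ∘ J^a_{−m} = 0 for all a, m ≥ 0}` is one-dimensional,
spanned by the coordinate functional of `v₀` (= the basis vector labelled by the
empty sequence) with respect to the given basis. -/
theorem statement19 (k : ℂ) [AddCommGroup V] [Module ℂ V]
    (ρ : AffineFamily V) (hρ : IsLevelRep k ρ) (v₀ : V)
    (hv : ∀ n : ℤ, 0 ≤ n → ρ.Jz n v₀ = 0 ∧ ρ.Jp n v₀ = 0 ∧ ρ.Jm n v₀ = 0)
    (e : ℕ ≃ Fin 3 × ℕ)
    (b : Module.Basis {l : List ℕ // l.Chain' (· ≥ ·)} ℂ V)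
    (hb : ∀ l : {l : List ℕ // l.Chain' (· ≥ ·)},
      b l = ((l.val.map fun i => negMode ρ (e i)).prod) v₀) :
    ∀ φ : V →ₗ[ℂ] ℂ,
      (∀ m : ℤ, 0 ≤ m →
        φ ∘ₗ ρ.Jz (-m) = 0 ∧ φ ∘ₗ ρ.Jp (-m) = 0 ∧ φ ∘ₗ ρ.Jm (-m) = 0) ↔
      ∃ c : ℂ, φ = c • b.coord ⟨[], List.isChain_nil⟩ := by
  classical
  intro φ
  have hb' : ∀ l : {l : List ℕ // l.Chain' (· ≥ ·)}, b l = Stmt19.Wl ρ e v₀ l.val := hb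
  constructor
  · intro hφ
    have hz : ∀ (p : Fin 3 × ℕ) (x : V), φ (negMode ρ p x) = 0 := by
      intro p x
      obtain ⟨hA, hB, hC⟩ := hφ (((p.2 : ℕ) : ℤ) + 1) (by omega)
      unfold negMode
      split_ifs
      · simpa using LinearMap.ext_iff.mp hA x
      · simpa using LinearMap.ext_iff.mp hB x
      · simpa using LinearMap.ext_iff.mp hC x
    refine ⟨φ v₀, ?_⟩
    apply b.ext
    rintro ⟨l, hl⟩
    have hRHS : (φ v₀ • b.coord ⟨[], List.isChain_nil⟩) (b ⟨l, hl⟩)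
        = φ v₀ * (if (⟨l, hl⟩ : {l : List ℕ // l.Chain' (· ≥ ·)})
            = ⟨[], List.isChain_nil⟩ then 1 else 0) := by
      simp [Module.Basis.coord_apply, Module.Basis.repr_self, Finsupp.single_apply]
    rw [hRHS]
    cases l with
    | nil =>
      rw [if_pos rfl, mul_one, hb' _, Stmt19.Wl_nil]
    | cons i t =>
      rw [if_neg (by intro h; exact (List.cons_ne_nil i t) (congrArg Subtype.val h)),
        mul_zero, hb' _, Stmt19.Wl_cons]
      exact hz (e i) _
  · rintro ⟨c, rfl⟩ m hm
    have key : ∀ a : Fin 3,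
        (c • b.coord ⟨[], List.isChain_nil⟩) ∘ₗ Stmt19.Jgen ρ a (-m) = 0 := by
      intro a
      apply b.ext
      intro l
      have hmem := Stmt19.Jneg_mem hρ hv hb' l.val a m hm
      rw [← hb' l] at hmem
      simp only [LinearMap.comp_apply, LinearMap.smul_apply, LinearMap.zero_apply,
        smul_eq_mul]
      rw [Stmt19.coord_NN b hmem, mul_zero]
    exact ⟨key 0, key 1, key 2⟩
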